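/- Let b ∈ 𝕊 be non-real with Re(b) = 0, b b̄ = 0, and let λ, μ ∈ ℝ. Then P = t² + b t + λ + μ b has a split quaternion right zero if and only if λ + μ² = 0 or λ < 0. Moreover, if λ + μ² = 0 then P = (t + μ)(t - μ + b), and if λ < 0 then x = √(-λ) - ½ b (1 + μ/√(-λ)) is a right zero. -/

import Mathlib

open Polynomial

notation "𝕊" => QuaternionAlgebra ℝ (-1) 0 1

/-- For non-real vectorial `b` with `b b̄ = 0`, the polynomial
`P = t² + b t + λ + μ b` has a right zero iff `λ + μ² = 0` or `λ < 0`.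
If `λ + μ² = 0` then `P = (t + μ)(t - μ + b)`; if `λ < 0` then
`x = √(-λ) - ½ b (1 + μ/√(-λ))` is a right zero. -/
theorem zero_iff_of_null_norm (b : 𝕊) (hb : b ∉ Set.range (algebraMap ℝ 𝕊))
    (hb0 : b.re = 0) (hnull : b * star b = 0) (lam mu : ℝ) :
    ((∃ x : 𝕊, x ^ 2 + b * x + (lam : 𝕊) + (mu : 𝕊) * b = 0) ↔
      lam + mu ^ 2 = 0 ∨ lam < 0) ∧
    (lam + mu ^ 2 = 0 →
      (X + C ((mu : ℝ) : 𝕊)) * (X - C ((mu : ℝ) : 𝕊) + C b) =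
        X ^ 2 + C b * X + C ((lam : 𝕊) + (mu : 𝕊) * b)) ∧
    (lam < 0 →
      (((Real.sqrt (-lam) : ℝ) : 𝕊) -
          (2 : ℝ)⁻¹ • (b * (1 + ((mu / Real.sqrt (-lam) : ℝ) : 𝕊)))) ^ 2 +
        b * (((Real.sqrt (-lam) : ℝ) : 𝕊) -
          (2 : ℝ)⁻¹ • (b * (1 + ((mu / Real.sqrt (-lam) : ℝ) : 𝕊)))) +
        (lam : 𝕊) + (mu : 𝕊) * b = 0) := by
  have hsb : star b = -b := QuaternionAlgebra.star_eq_neg.mpr hb0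
  have hbb : b * b = 0 := by
    rw [hsb, mul_neg, neg_eq_zero] at hnull; exact hnull
  have hbne : b ≠ 0 := by
    rintro rfl; exact hb ⟨0, by simp⟩
  have hre : (b * b).re = 0 := by rw [hbb]; rfl
  simp only [QuaternionAlgebra.re_mul] at hre
  have hn : b.imI ^ 2 - b.imJ ^ 2 - b.imK ^ 2 = 0 := by
    linear_combination - hre + b.re * hb0
  have hbI : b.imI ≠ 0 := by
    intro h0
    have h2 : b.imJ = 0 := by nlinarith [sq_nonneg b.imJ, sq_nonneg b.imK]
    have h3 : b.imK = 0 := by nlinarith [sq_nonneg b.imJ, sq_nonneg b.imK]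
    exact hbne (by ext <;> simp [hb0, h0, h2, h3])
  -- Part 3
  have hpart3 : lam < 0 →
      (((Real.sqrt (-lam) : ℝ) : 𝕊) -
          (2 : ℝ)⁻¹ • (b * (1 + ((mu / Real.sqrt (-lam) : ℝ) : 𝕊)))) ^ 2 +
        b * (((Real.sqrt (-lam) : ℝ) : 𝕊) -
          (2 : ℝ)⁻¹ • (b * (1 + ((mu / Real.sqrt (-lam) : ℝ) : 𝕊)))) +
        (lam : 𝕊) + (mu : 𝕊) * b = 0 := by
    intro hl
    set s := Real.sqrt (-lam) with hsdef
    have hs : s ^ 2 = -lam := Real.sq_sqrt (by linarith)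
    have hsne : s ≠ 0 := ne_of_gt (Real.sqrt_pos.mpr (by linarith))
    have hm : s * (mu / s) = mu := by field_simp
    rw [pow_two]
    ext <;>
      simp only [QuaternionAlgebra.re_add, QuaternionAlgebra.imI_add,
        QuaternionAlgebra.imJ_add, QuaternionAlgebra.imK_add,
        QuaternionAlgebra.re_sub, QuaternionAlgebra.imI_sub,
        QuaternionAlgebra.imJ_sub, QuaternionAlgebra.imK_sub,
        QuaternionAlgebra.re_mul, QuaternionAlgebra.imI_mul,
        QuaternionAlgebra.imJ_mul, QuaternionAlgebra.imK_mul,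
        QuaternionAlgebra.re_smul, QuaternionAlgebra.imI_smul,
        QuaternionAlgebra.imJ_smul, QuaternionAlgebra.imK_smul,
        QuaternionAlgebra.re_one, QuaternionAlgebra.imI_one,
        QuaternionAlgebra.imJ_one, QuaternionAlgebra.imK_one,
        QuaternionAlgebra.re_coe, QuaternionAlgebra.imI_coe,
        QuaternionAlgebra.imJ_coe, QuaternionAlgebra.imK_coe,
        QuaternionAlgebra.re_zero, QuaternionAlgebra.imI_zero,
        QuaternionAlgebra.imJ_zero, QuaternionAlgebra.imK_zero,
        smul_eq_mul, hb0]
    · linear_combination hs + (4 : ℝ)⁻¹ * (1 - (mu/s)^2) * hn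
    · linear_combination - b.imI * hm
    · linear_combination - b.imJ * hm
    · linear_combination - b.imK * hm
  refine ⟨⟨?_, ?_⟩, ?_, hpart3⟩
  · -- forward
    rintro ⟨x, hx⟩
    rw [pow_two] at hx
    have e0 := congrArg QuaternionAlgebra.re hx
    have e1 := congrArg QuaternionAlgebra.imI hx
    have e2 := congrArg QuaternionAlgebra.imJ hx
    have e3 := congrArg QuaternionAlgebra.imK hx
    simp only [QuaternionAlgebra.re_add, QuaternionAlgebra.imI_add,
      QuaternionAlgebra.imJ_add, QuaternionAlgebra.imK_add,
      QuaternionAlgebra.re_mul, QuaternionAlgebra.imI_mul,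
      QuaternionAlgebra.imJ_mul, QuaternionAlgebra.imK_mul,
      QuaternionAlgebra.re_coe, QuaternionAlgebra.imI_coe,
      QuaternionAlgebra.imJ_coe, QuaternionAlgebra.imK_coe,
      QuaternionAlgebra.re_zero, QuaternionAlgebra.imI_zero,
      QuaternionAlgebra.imJ_zero, QuaternionAlgebra.imK_zero, hb0] at e0 e1 e2 e3
    by_cases hr : x.re = 0
    · left
      have h1' : (lam + (- x.imI^2 + x.imJ^2 + x.imK^2)) * b.imI = 0 := by
        linear_combination b.imI * e0 - b.imJ * e3 + b.imK * e2 + x.imI * hn +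
          (2*x.imK*b.imJ - 2*x.imJ*b.imK - x.re*b.imI) * hr
      have hlc : lam + (- x.imI^2 + x.imJ^2 + x.imK^2) = 0 :=
        (mul_eq_zero.mp h1').resolve_right hbI
      have h2' : (lam + mu^2) * b.imI = 0 := by
        linear_combination mu * e1 - x.imI * e0 + x.imK * e2 - x.imJ * e3 +
          (b.imI + x.imI) * hlc +
          (- b.imI*mu - x.imK*b.imJ + x.imJ*b.imK - 2*x.imI*mu + x.re*x.imI) * hr
      exact (mul_eq_zero.mp h2').resolve_right hbI
    · right
      set r := x.re with hrdef
      have hf0 : 4*r^3 = 2*r*((r^2 + x.imI^2 - x.imJ^2 - x.imK^2) - lam) := by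
        linear_combination 2*r*e0 + b.imI*e1 - b.imJ*e2 - b.imK*e3 - (r + mu) * hn
      have hA : (r^2 + x.imI^2 - x.imJ^2 - x.imK^2) - lam = 2*r^2 := by
        have h2r : (2*r) ≠ 0 := by simpa using hr
        apply mul_left_cancel₀ h2r
        linear_combination - hf0
      have hf1 : 4*r^2*x.imI = -(2*r*mu + ((r^2 + x.imI^2 - x.imJ^2 - x.imK^2) - lam))*b.imI := by
        linear_combination 2*r*e1 - b.imI*e0 + b.imJ*e3 - b.imK*e2 - x.imI * hn
      have hf2 : 4*r^2*x.imJ = -(2*r*mu + ((r^2 + x.imI^2 - x.imJ^2 - x.imK^2) - lam))*b.imJ := by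
        linear_combination 2*r*e2 + b.imI*e3 - b.imJ*e0 - b.imK*e1 - x.imJ * hn
      have hf3 : 4*r^2*x.imK = -(2*r*mu + ((r^2 + x.imI^2 - x.imJ^2 - x.imK^2) - lam))*b.imK := by
        linear_combination 2*r*e3 - b.imI*e2 + b.imJ*e1 - b.imK*e0 - x.imK * hn
      have h16 : (16*r^4) * (x.imI^2 - x.imJ^2 - x.imK^2) = (16*r^4) * 0 := by
        set cc := 2*r*mu + ((r^2 + x.imI^2 - x.imJ^2 - x.imK^2) - lam) with hccdef
        linear_combination (4*r^2*x.imI - cc*b.imI) * hf1 - (4*r^2*x.imJ - cc*b.imJ) * hf2 -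
          (4*r^2*x.imK - cc*b.imK) * hf3 + cc^2 * hn
      have h16ne : (16*r^4 : ℝ) ≠ 0 := by positivity
      have hq : x.imI^2 - x.imJ^2 - x.imK^2 = 0 := by
        have := mul_left_cancel₀ h16ne h16; linarith
      have hlam : lam = - r^2 := by linarith [hA, hq]
      have : 0 < r^2 := lt_of_le_of_ne (sq_nonneg r) (Ne.symm (pow_ne_zero 2 hr))
      linarith
  · -- backward
    rintro (h | h)
    · refine ⟨((-mu : ℝ) : 𝕊), ?_⟩
      rw [pow_two]
      ext <;> simp <;> nlinarith [h]

    · exact ⟨_, hpart3 h⟩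
  · -- part 2
    intro h
    have hl : ((lam : ℝ) : 𝕊) = -(((mu:ℝ):𝕊) * ((mu:ℝ):𝕊)) := by
      have hlm : lam = -(mu*mu) := by nlinarith [h]
      rw [hlm]; ext <;> simp
    rw [hl]
    have hc1 : (X : 𝕊[X]) * C ((mu:ℝ):𝕊) = C ((mu:ℝ):𝕊) * X := X_mul_C _
    have hc2 : (X : 𝕊[X]) * C b = C b * X := X_mul_C _
    simp only [map_add, map_neg, map_mul]
    linear_combination (norm := noncomm_ring) hc2 - hc1
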